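/- Let X be a metric space, let c > 0 and ρ ∈ (0,1), and let f : {0,1}^ℕ → X be a map such that for all distinct β, β′ ∈ {0,1}^ℕ, d(f(β), f(β′)) ≥ c · ρ^{m(β,β′)}, where m(β,β′) is the least n ∈ ℕ with β(n) ≠ β′(n). Then the Hausdorff dimension of the range of f is at least log 2 / log(1/ρ). -/

import Mathlib

open Filter Topology Set
open scoped ENNReal NNReal

open Filter Topology

/-- The term of the binary expansion series. -/
noncomputable def binTerm (β : ℕ → Bool) (n : ℕ) : ℝ :=
  if β n then ((2:ℝ)⁻¹) ^ (n + 1) else 0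

lemma binTerm_nonneg (β : ℕ → Bool) (n : ℕ) : 0 ≤ binTerm β n := by
  unfold binTerm; split <;> positivity

lemma binTerm_le (β : ℕ → Bool) (n : ℕ) : binTerm β n ≤ ((2:ℝ)⁻¹) ^ (n + 1) := by
  unfold binTerm; split
  · exact le_rfl
  · positivity

lemma summable_half_pow : Summable (fun n : ℕ => ((2:ℝ)⁻¹) ^ (n + 1)) := by
  exact (summable_geometric_of_lt_one (by norm_num) (by norm_num)).comp_injective
    (add_left_injective 1)

lemma binTerm_summable (β : ℕ → Bool) : Summable (binTerm β) :=
  Summable.of_nonneg_of_le (binTerm_nonneg β) (binTerm_le β) summable_half_pow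

/-- Binary expansion map from Cantor space to `ℝ`. -/
noncomputable def binMap (β : ℕ → Bool) : ℝ := ∑' n, binTerm β n

/-- Lipschitz-type estimate for `binMap`. -/
lemma binMap_dist (x y : ℕ → Bool) (n : ℕ) (h : ∀ i < n, x i = y i) :
    |binMap x - binMap y| ≤ ((2:ℝ)⁻¹) ^ n := by
  have hsx := binTerm_summable x
  have hsy := binTerm_summable y
  set g : ℕ → ℝ := fun k => if k < n then 0 else ((2:ℝ)⁻¹) ^ (k + 1) with hg
  have hgs : Summable g := by
    refine Summable.of_nonneg_of_le (fun k => ?_) (fun k => ?_) summable_half_pow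
    · simp only [hg]; split <;> positivity
    · simp only [hg]; split
      · positivity
      · exact le_rfl
  have hdiff : ∀ k, |binTerm x k - binTerm y k| ≤ g k := by
    intro k
    by_cases hk : k < n
    · simp [hg, hk, h k hk, binTerm]
    · simp only [hg, hk, if_false]
      have h1 := binTerm_nonneg x k
      have h2 := binTerm_nonneg y k
      have h3 := binTerm_le x k
      have h4 := binTerm_le y k
      rw [abs_le]; constructor <;> nlinarith
  have habs : Summable fun k => |binTerm x k - binTerm y k| :=
    Summable.of_nonneg_of_le (fun k => abs_nonneg _) hdiff hgs
  have h1 : binMap x - binMap y = ∑' k, (binTerm x k - binTerm y k) :=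
    (Summable.tsum_sub hsx hsy).symm
  have h2 : |∑' k, (binTerm x k - binTerm y k)| ≤ ∑' k, |binTerm x k - binTerm y k| := by
    simpa [Real.norm_eq_abs] using norm_tsum_le_tsum_norm (f := fun k => binTerm x k - binTerm y k)
      (by simpa [Real.norm_eq_abs] using habs)
  have h3 : ∑' k, |binTerm x k - binTerm y k| ≤ ∑' k, g k := Summable.tsum_le_tsum hdiff habs hgs
  have h4 : ∑' k, g k = ((2:ℝ)⁻¹) ^ n := by
    have := Summable.sum_add_tsum_nat_add (f := g) n hgs
    have hz : ∑ i ∈ Finset.range n, g i = 0 := by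
      apply Finset.sum_eq_zero
      intro i hi
      simp [hg, Finset.mem_range.1 hi]
    have hsh : ∀ i : ℕ, g (i + n) = ((2:ℝ)⁻¹) ^ (n + 1) * ((2:ℝ)⁻¹) ^ i := by
      intro i
      simp only [hg, Nat.not_lt.2 (Nat.le_add_left n i), if_false]
      ring
    rw [hz, zero_add] at this
    rw [← this]
    rw [tsum_congr hsh, tsum_mul_left,
      tsum_geometric_of_lt_one (by norm_num) (by norm_num : (2:ℝ)⁻¹ < 1)]
    norm_num
    ring
  calc |binMap x - binMap y| = |∑' k, (binTerm x k - binTerm y k)| := by rw [h1]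
    _ ≤ ∑' k, |binTerm x k - binTerm y k| := h2
    _ ≤ ∑' k, g k := h3
    _ = ((2:ℝ)⁻¹) ^ n := h4

/-- Surjectivity of `binMap` onto `[0,1)`. -/
lemma binMap_surj {x : ℝ} (hx : x ∈ Set.Ico (0:ℝ) 1) : ∃ β, binMap β = x := by
  obtain ⟨hx0, hx1⟩ := hx
  set a : ℕ → ℕ := fun n => ⌊x * 2 ^ n⌋₊ with ha
  have hxn : ∀ n : ℕ, (0:ℝ) ≤ x * 2 ^ n := fun n => by positivity
  have hfl : ∀ n : ℕ, (a n : ℝ) ≤ x * 2 ^ n := fun n => Nat.floor_le (hxn n)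
  have hfl' : ∀ n : ℕ, x * 2 ^ n < a n + 1 := fun n => Nat.lt_floor_add_one _
  have hdi : ∀ n : ℕ, a (n + 1) = 2 * a n ∨ a (n + 1) = 2 * a n + 1 := by
    intro n
    have hl : 2 * a n ≤ a (n + 1) := by
      apply Nat.le_floor
      push_cast
      calc (2:ℝ) * a n ≤ 2 * (x * 2 ^ n) := by linarith [hfl n]
        _ = x * 2 ^ (n + 1) := by ring
    have hu : a (n + 1) < 2 * a n + 2 := by
      rw [Nat.floor_lt (hxn _)]
      push_cast
      calc x * 2 ^ (n+1) = 2 * (x * 2 ^ n) := by ring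
        _ < 2 * (a n + 1) := by linarith [hfl' n]
        _ = 2 * a n + 2 := by ring
    omega
  set β : ℕ → Bool := fun n => decide (a (n + 1) = 2 * a n + 1) with hβ
  have hS : ∀ N : ℕ, ∑ n ∈ Finset.range N, binTerm β n = (a N : ℝ) / 2 ^ N := by
    intro N
    induction N with
    | zero =>
      simp [ha, Nat.floor_eq_zero.2 (by simpa using hx1)]
    | succ N ih =>
      rw [Finset.sum_range_succ, ih]
      rcases hdi N with hcase | hcase
      · have hb : β N = false := by simp only [hβ]; simp; omega
        simp only [binTerm, hb, Bool.false_eq_true, if_false, add_zero, hcase]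
        push_cast
        field_simp
        ring
      · have hb : β N = true := by simp only [hβ]; simp [hcase]
        simp only [binTerm, hb, if_true, hcase]
        push_cast
        field_simp
        rw [add_mul, mul_assoc]
        simp only [one_div, inv_pow]
        rw [inv_mul_cancel₀ (by positivity : (2:ℝ) ^ (N + 1) ≠ 0), mul_one]
        ring
  have hlim : Tendsto (fun N => (a N : ℝ) / 2 ^ N) atTop (𝓝 x) := by
    apply tendsto_of_tendsto_of_tendsto_of_le_of_le
      (g := fun N : ℕ => x - ((2:ℝ)⁻¹) ^ N) (h := fun _ : ℕ => x)
    · have : Tendsto (fun N : ℕ => ((2:ℝ)⁻¹) ^ N) atTop (𝓝 0) :=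
        tendsto_pow_atTop_nhds_zero_of_lt_one (by norm_num) (by norm_num)
      simpa using tendsto_const_nhds.sub this
    · exact tendsto_const_nhds
    · intro N
      have h2 : (0:ℝ) < 2 ^ N := by positivity
      have h1 : x * 2 ^ N - 1 ≤ (a N : ℝ) := by linarith [hfl' N]
      calc x - ((2:ℝ)⁻¹) ^ N = (x * 2 ^ N - 1) / 2 ^ N := by
            field_simp
            rw [sub_mul, one_div, inv_pow, inv_mul_cancel₀ (ne_of_gt h2)]
          _ ≤ (a N : ℝ) / 2 ^ N := by
            gcongr
    · intro N
      have h2 : (0:ℝ) < 2 ^ N := by positivity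
      rw [div_le_iff₀ h2]
      exact hfl N
  have hhs : HasSum (binTerm β) (binMap β) := (binTerm_summable β).hasSum
  have := hhs.tendsto_sum_nat
  rw [funext hS] at this
  exact ⟨β, tendsto_nhds_unique this hlim⟩


/-- If `f : {0,1}^ℕ → X` satisfies the separation condition
`dist (f β) (f β') ≥ c ρ^{m(β,β')}` (with `m(β,β')` the first index where `β, β'` differ),
then the range of `f` has Hausdorff dimension at least `log 2 / log (1/ρ)`. -/
theorem dimH_of_separated_cantor_family {X : Type*} [MetricSpace X]
    (c ρ : ℝ) (hc : 0 < c) (hρ : ρ ∈ Set.Ioo (0 : ℝ) 1)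
    (f : (ℕ → Bool) → X)
    (hsep : ∀ β β' : ℕ → Bool, ∀ n : ℕ, β n ≠ β' n → (∀ m < n, β m = β' m) →
      c * ρ ^ n ≤ dist (f β) (f β')) :
    ENNReal.ofReal (Real.log 2 / Real.log (1 / ρ)) ≤ dimH (Set.range f) := by
  obtain ⟨hρ0, hρ1⟩ := hρ
  letI : MetricSpace (ℕ → Bool) := PiNat.metricSpace
  -- the separation at the first difference
  have hlow : ∀ β β' : ℕ → Bool, β ≠ β' →
      c * ρ ^ (PiNat.firstDiff β β') ≤ dist (f β) (f β') := by
    intro β β' hne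
    exact hsep β β' _ (PiNat.apply_firstDiff_ne hne)
      (fun m hm => PiNat.apply_eq_of_lt_firstDiff hm)
  have hinj : Function.Injective f := by
    intro β β' h
    by_contra hne
    have h1 := hlow β β' hne
    rw [h, dist_self] at h1
    nlinarith [pow_pos hρ0 (PiNat.firstDiff β β')]
  -- the exponent
  have hlogρ : 0 < Real.log (1 / ρ) := Real.log_pos (by rw [one_div]; exact one_lt_inv₀ hρ0 |>.2 hρ1)
  set r : NNReal := Real.toNNReal (Real.log 2 / Real.log (1 / ρ)) with hrdef
  have hr0 : 0 < r := by
    rw [hrdef, Real.toNNReal_pos]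
    exact div_pos (Real.log_pos one_lt_two) hlogρ
  have hrcoe : (r : ℝ) = Real.log 2 / Real.log (1 / ρ) :=
    Real.coe_toNNReal _ (le_of_lt (div_pos (Real.log_pos one_lt_two) hlogρ))
  have hρr : ρ ^ (r : ℝ) = 2⁻¹ := by
    rw [Real.rpow_def_of_pos hρ0, hrcoe]
    have hlρ : Real.log (1 / ρ) = -Real.log ρ := by rw [one_div, Real.log_inv]
    have hlρ0 : Real.log ρ ≠ 0 := by
      intro h; rw [hlρ, h] at hlogρ; simp at hlogρ
    have harg : Real.log ρ * (Real.log 2 / -Real.log ρ) = -Real.log 2 := by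
      field_simp
    rw [hlρ, harg, Real.exp_neg, Real.exp_log two_pos]
  -- the inverse map
  classical
  set g : X → (ℕ → Bool) := fun x => if h : ∃ β, f β = x then h.choose else fun _ => false
    with hgdef
  have hgf : ∀ β, g (f β) = β := by
    intro β
    have hex : ∃ β', f β' = f β := ⟨β, rfl⟩
    simp only [hgdef, dif_pos hex]
    exact hinj hex.choose_spec
  -- g is Hölder on the range of f
  set K : NNReal := Real.toNNReal (c⁻¹ ^ (r : ℝ)) with hKdef
  have hKcoe : (K : ℝ) = c⁻¹ ^ (r : ℝ) :=
    Real.coe_toNNReal _ (Real.rpow_nonneg (inv_nonneg.2 hc.le) _)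
  have hhold : HolderOnWith K r g (Set.range f) := by
    rintro x ⟨β, rfl⟩ y ⟨β', rfl⟩
    rw [hgf, hgf]
    rcases eq_or_ne β β' with rfl | hne
    · simp
    · have hd : dist (f β) (f β') > 0 := by
        have := hlow β β' hne
        nlinarith [pow_pos hρ0 (PiNat.firstDiff β β')]
      set m := PiNat.firstDiff β β' with hm
      -- real inequality
      have key : ((2:ℝ)⁻¹) ^ m ≤ (K : ℝ) * dist (f β) (f β') ^ (r : ℝ) := by
        have h1 : (c * ρ ^ m) ^ (r : ℝ) ≤ dist (f β) (f β') ^ (r : ℝ) :=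
          Real.rpow_le_rpow (by positivity) (hlow β β' hne) r.coe_nonneg
        have h2 : (c * ρ ^ m) ^ (r : ℝ) = c ^ (r : ℝ) * ((2:ℝ)⁻¹) ^ m := by
          rw [Real.mul_rpow hc.le (by positivity), ← Real.rpow_natCast ρ m,
            ← Real.rpow_mul hρ0.le, mul_comm (m : ℝ), Real.rpow_mul hρ0.le, hρr,
            Real.rpow_natCast]
        have h3 : (K : ℝ) * (c ^ (r : ℝ) * ((2:ℝ)⁻¹) ^ m) = ((2:ℝ)⁻¹) ^ m := by
          rw [hKcoe, ← mul_assoc, ← Real.mul_rpow (inv_nonneg.2 hc.le) hc.le,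
            inv_mul_cancel₀ hc.ne', Real.one_rpow, one_mul]
        calc ((2:ℝ)⁻¹) ^ m = (K : ℝ) * (c ^ (r : ℝ) * ((2:ℝ)⁻¹) ^ m) := h3.symm
          _ = (K : ℝ) * (c * ρ ^ m) ^ (r : ℝ) := by rw [h2]
          _ ≤ (K : ℝ) * dist (f β) (f β') ^ (r : ℝ) := by
              have : (0:ℝ) ≤ (K : ℝ) := K.coe_nonneg
              nlinarith [h1]
      -- move to edist
      have hdβ : dist β β' = ((1:ℝ)/2) ^ m := PiNat.dist_eq_of_ne hne
      rw [edist_dist, edist_dist, ENNReal.ofReal_rpow_of_nonneg dist_nonneg r.coe_nonneg]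
      have : (K : ℝ≥0∞) = ENNReal.ofReal (K : ℝ) := by
        rw [ENNReal.ofReal_coe_nnreal]
      rw [this, ← ENNReal.ofReal_mul (by positivity)]
      apply ENNReal.ofReal_le_ofReal
      rw [hdβ]
      rw [one_div]
      exact key
  -- image of range f under g is everything
  have himg : g '' (Set.range f) = Set.univ := by
    apply Set.eq_univ_of_forall
    intro β
    exact ⟨f β, ⟨β, rfl⟩, hgf β⟩
  -- Lipschitz property of binMap
  have hlip : ∀ x y : ℕ → Bool, dist (binMap x) (binMap y) ≤ dist x y := by
    rw [PiNat.lipschitz_with_one_iff_forall_dist_image_le_of_mem_cylinder]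
    intro x y n hxy
    rw [Real.dist_eq, one_div]
    exact binMap_dist x y n (fun i hi => (PiNat.mem_cylinder_iff.1 hxy i hi).symm)
  have hlipW : LipschitzWith 1 binMap := by
    apply LipschitzWith.of_dist_le_mul
    intro x y
    rw [NNReal.coe_one, one_mul]
    exact hlip x y
  -- dimension of the Cantor space is at least 1
  have hC1 : (1 : ℝ≥0∞) ≤ dimH (Set.univ : Set (ℕ → Bool)) := by
    have hIco : dimH (Set.Ico (0:ℝ) 1) = 1 := by
      rw [Real.dimH_of_nonempty_interior (s := Set.Ico (0:ℝ) 1)]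
      · simp
      · rw [interior_Ico]
        exact ⟨1/2, by norm_num⟩
    have hsub : Set.Ico (0:ℝ) 1 ⊆ binMap '' Set.univ := by
      intro x hx
      obtain ⟨β, hβ⟩ := binMap_surj hx
      exact ⟨β, Set.mem_univ _, hβ⟩
    calc (1 : ℝ≥0∞) = dimH (Set.Ico (0:ℝ) 1) := hIco.symm
      _ ≤ dimH (binMap '' Set.univ) := dimH_mono hsub
      _ ≤ dimH (Set.univ : Set (ℕ → Bool)) := hlipW.dimH_image_le _
  -- conclude
  have hchain : (1 : ℝ≥0∞) ≤ dimH (Set.range f) / r := by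
    calc (1 : ℝ≥0∞) ≤ dimH (Set.univ : Set (ℕ → Bool)) := hC1
      _ = dimH (g '' (Set.range f)) := by rw [himg]
      _ ≤ dimH (Set.range f) / r := hhold.dimH_image_le hr0
  rw [ENNReal.le_div_iff_mul_le (Or.inl (by exact_mod_cast hr0.ne')) (Or.inl ENNReal.coe_ne_top),
    one_mul] at hchain
  exact le_trans (le_of_eq rfl) hchain
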